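/- Let k be a field, A a finite-dimensional commutative k-algebra with orientation φ, and e : A → k an augmentation with maximal ideal m = ker e. Then e is isotropic (i.e., φ(e*(1)²) = 0, where e* is the B_φ-adjoint of e) if and only if the localization A_m is not isomorphic to k. -/

import Mathlib

/-- Let `k` be a field, `A` a finite-dimensional commutative `k`-algebra
with orientation `φ` (so `B_φ(a, b) = φ (a b)` is non-degenerate), `e : A → k` an
augmentation with maximal ideal `m = ker e`, and `x = e*(1)` the `B_φ`-adjoint element
(`φ (x * y) = e y` for all `y`).  Then `e` is isotropic, i.e. `φ (x * x) = 0`, if and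
only if the localization `A_m` is not isomorphic to `k` (as a `k`-algebra). -/
theorem isotropic_iff_localization_not_trivial
    (k A : Type*) [Field k] [CommRing A] [Algebra k A] [FiniteDimensional k A]
    (φ : A →ₗ[k] k)
    (hnd : Function.Bijective fun a : A => φ ∘ₗ LinearMap.mul k A a)
    (e : A →ₐ[k] k) (x : A) (hx : ∀ y : A, φ (x * y) = e y)
    [hm : (RingHom.ker (e : A →+* k)).IsPrime] :
    φ (x * x) = 0 ↔
      ¬ Nonempty ((Localization.AtPrime (RingHom.ker (e : A →+* k))) ≃ₐ[k] k) := by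
  set m : Ideal A := RingHom.ker (e : A →+* k) with hmdef
  set L := Localization.AtPrime m
  have hxx : φ (x * x) = e x := hx x
  -- x annihilates m
  have hann : ∀ y : A, e y = 0 → x * y = 0 := by
    intro y hy
    have h1 : (fun a : A => φ ∘ₗ LinearMap.mul k A a) (x * y)
        = (fun a : A => φ ∘ₗ LinearMap.mul k A a) 0 := by
      ext z
      simp only [LinearMap.comp_apply, LinearMap.mul_apply', zero_mul, map_zero,
        LinearMap.zero_apply]
      rw [mul_assoc, hx (y * z), map_mul, hy, zero_mul]
    exact hnd.injective h1
  rw [hxx]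
  constructor
  · rintro hex ⟨f⟩
    -- x ∈ m, so algebraMap A L x is not a unit
    have hxm : x ∈ m := hex
    have hnu : ¬ IsUnit (algebraMap A L x) := by
      intro hu
      rw [IsLocalization.AtPrime.isUnit_to_map_iff L m x] at hu
      exact hu hxm
    have hc : f (algebraMap A L x) = 0 := by
      by_contra h0
      exact hnu (by simpa using (IsUnit.map f.symm (isUnit_iff_ne_zero.mpr h0).unit.isUnit))
    have h0 : algebraMap A L x = 0 := by
      apply f.injective
      rw [hc, map_zero]
    obtain ⟨s, hs⟩ := (IsLocalization.map_eq_zero_iff m.primeCompl L x).mp h0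
    have hes : e (s : A) ≠ 0 := s.2
    apply hes
    rw [← hx (s : A), mul_comm, hs, map_zero]
  · intro hne
    by_contra hex
    apply hne
    -- e x ≠ 0, so x ∈ primeCompl
    have hxc : x ∈ m.primeCompl := hex
    have hu : ∀ s : m.primeCompl, IsUnit ((e : A →+* k) s) := by
      intro s
      exact isUnit_iff_ne_zero.mpr s.2
    let ψ : L →+* k := IsLocalization.lift hu
    have hψalg : ∀ a : A, ψ (algebraMap A L a) = e a := fun a =>
      IsLocalization.lift_eq hu a
    have hcomm : ∀ c : k, ψ (algebraMap k L c) = c := by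
      intro c
      rw [IsScalarTower.algebraMap_apply k A L, hψalg, e.commutes]
      simp
    let Ψ : L →ₐ[k] k := ⟨ψ, hcomm⟩
    have hbij : Function.Bijective Ψ := by
      constructor
      · intro z w hzw
        obtain ⟨⟨a, s⟩, rfl⟩ := IsLocalization.mk'_surjective m.primeCompl z
        obtain ⟨⟨b, t⟩, rfl⟩ := IsLocalization.mk'_surjective m.primeCompl w
        have ha : ψ (IsLocalization.mk' L a s) * e (s : A) = e a := by
          have h := congrArg ψ (IsLocalization.mk'_spec L a s)
          rw [map_mul, hψalg, hψalg] at h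
          exact h
        have hb : ψ (IsLocalization.mk' L b t) * e (t : A) = e b := by
          have h := congrArg ψ (IsLocalization.mk'_spec L b t)
          rw [map_mul, hψalg, hψalg] at h
          exact h
        have hzw' : ψ (IsLocalization.mk' L a s) = ψ (IsLocalization.mk' L b t) := hzw
        have key : e (a * (t : A)) = e (b * (s : A)) := by
          rw [map_mul, map_mul, ← ha, ← hb, hzw']
          ring
        have hz0 : x * (a * (t : A)) = x * (b * (s : A)) := by
          have h := hann (a * (t : A) - b * (s : A)) (by rw [map_sub, key, sub_self])
          rw [mul_sub, sub_eq_zero] at h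
          exact h
        rw [IsLocalization.mk'_eq_iff_eq]
        have hux : IsUnit (algebraMap A L x) :=
          IsLocalization.map_units L (⟨x, hxc⟩ : m.primeCompl)
        apply hux.mul_left_cancel
        rw [← map_mul, ← map_mul]
        congr 1
        linear_combination hz0
      · intro c
        exact ⟨algebraMap k L c, hcomm c⟩
    exact ⟨AlgEquiv.ofBijective Ψ hbij⟩
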